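/- arXiv:0910.5479 — 2 statements merged into one kernel-verified Lean document; each statement's English description precedes it below -/
import Mathlib

section
/- Let σ, θ, μ, ν define a transition datum and suppose 𝒱, 𝒲 are two transitions of type (σ,θ;μ,ν). Then the pointwise intersection 𝒱 ∩ 𝒲, defined by (𝒱∩𝒲)(n) = 𝒱(n) ∩ 𝒲(n) (intersection of Young diagrams, i.e., min of row lengths), is again a transition of type (σ,θ;μ,ν). Consequently, if a minimum transition exists it is unique. -/
/- Half-integers are encoded by integers: `k : ℤ` represents the half-integer `k + 1/2`.
Young diagrams are encoded as weakly decreasing, eventually zero sequences `ℕ → ℕ`. -/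

/-- A Young diagram: a weakly decreasing, eventually zero sequence. -/
def IsYoungSeq (f : ℕ → ℕ) : Prop :=
  (∀ i, f (i + 1) ≤ f i) ∧ ∃ N, ∀ i, N ≤ i → f i = 0

/-- The conjugate (transpose) partition: column lengths. -/
noncomputable def conjSeq (f : ℕ → ℕ) (j : ℕ) : ℕ :=
  Set.ncard {i : ℕ | j < f i}

/-- Row interlacing `≻⁺`. -/
def InterlacePlus (f g : ℕ → ℕ) : Prop :=
  ∀ i : ℕ, g i ≤ f i ∧ f (i + 1) ≤ g i

/-- Column interlacing `≻⁻`. -/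
def InterlaceMinus (f g : ℕ → ℕ) : Prop :=
  ∀ j : ℕ, conjSeq g j ≤ conjSeq f j ∧ conjSeq f (j + 1) ≤ conjSeq g j

/-- `≻^ε` for `ε = ±1`. -/
def InterlaceSgn (ε : ℤ) (f g : ℕ → ℕ) : Prop :=
  if ε = 1 then InterlacePlus f g else InterlaceMinus f g

/-- A transition of type `(σ,θ;μ,ν)`: a map `𝒱 : ℤ → {Young diagrams}` with
`𝒱(n) = ν₋` for `n ≪ 0`, `𝒱(n) = ν₊` for `n ≫ 0`, and for each half-integer `h`
(encoded `k`, so `h ∓ 1/2` are the integers `k`, `k+1`),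
`𝒱(h − μ∘θ(h)/2) ≻^{σ∘θ(h)} 𝒱(h + μ∘θ(h)/2)`. -/
def IsTransition (σ θ μ : ℤ → ℤ) (νm νp : ℕ → ℕ) (V : ℤ → ℕ → ℕ) : Prop :=
  (∀ n : ℤ, IsYoungSeq (V n)) ∧
  (∃ A : ℤ, ∀ n : ℤ, n < A → V n = νm) ∧
  (∃ B : ℤ, ∀ n : ℤ, B < n → V n = νp) ∧
  (∀ k : ℤ, if μ (θ k) = 1 then InterlaceSgn (σ (θ k)) (V k) (V (k + 1))
            else InterlaceSgn (σ (θ k)) (V (k + 1)) (V k))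

lemma ncard_Iio' (n : ℕ) : (Set.Iio n).ncard = n := by
  rw [← Finset.coe_Iio, Set.ncard_coe_finset, Nat.card_Iio]

lemma ncard_Iic' (n : ℕ) : (Set.Iic n).ncard = n + 1 := by
  rw [← Finset.coe_Iic, Set.ncard_coe_finset, Nat.card_Iic]

lemma dc_eq_Iio (S : Set ℕ) (hfin : S.Finite)
    (hdc : ∀ ⦃a b : ℕ⦄, a ≤ b → b ∈ S → a ∈ S) : S = Set.Iio S.ncard := by
  ext i
  simp only [Set.mem_Iio]
  constructor
  · intro hi
    have h1 : Set.Iic i ⊆ S := fun a ha => hdc ha hi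
    have h2 : (Set.Iic i).ncard ≤ S.ncard := Set.ncard_le_ncard h1 hfin
    have hIic := ncard_Iic' i
    omega
  · intro hi
    by_contra h
    have h2 : S ⊆ Set.Iio i := by
      intro b hb
      by_contra hbi
      simp only [Set.mem_Iio, not_lt] at hbi
      exact h (hdc hbi hb)
    have h3 : S.ncard ≤ (Set.Iio i).ncard := Set.ncard_le_ncard h2 (Set.finite_Iio i)
    have hIio := ncard_Iio' i
    omega

lemma young_set_eq (f : ℕ → ℕ) (hf : IsYoungSeq f) (j : ℕ) :
    {i : ℕ | j < f i} = Set.Iio (conjSeq f j) := by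
  have hanti : Antitone f := antitone_nat_of_succ_le hf.1
  obtain ⟨N, hN⟩ := hf.2
  have hfin : {i : ℕ | j < f i}.Finite := by
    apply Set.Finite.subset (Set.finite_Iio N)
    intro i hi
    simp only [Set.mem_setOf_eq] at hi
    simp only [Set.mem_Iio]
    by_contra h
    push_neg at h
    rw [hN i h] at hi
    omega
  exact dc_eq_Iio _ hfin (fun a b hab hb => lt_of_lt_of_le hb (hanti hab))

lemma conj_min (f f' : ℕ → ℕ) (hf : IsYoungSeq f) (hf' : IsYoungSeq f') (j : ℕ) :
    conjSeq (fun i => min (f i) (f' i)) j = min (conjSeq f j) (conjSeq f' j) := by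
  have h1 : {i : ℕ | j < min (f i) (f' i)} = {i : ℕ | j < f i} ∩ {i : ℕ | j < f' i} := by
    ext i; simp [lt_min_iff]
  unfold conjSeq
  simp only [h1, young_set_eq f hf, young_set_eq f' hf', Set.Iio_inter_Iio]
  simp [ncard_Iio']

lemma interlacePlus_min (f f' g g' : ℕ → ℕ)
    (h : InterlacePlus f g) (h' : InterlacePlus f' g') :
    InterlacePlus (fun i => min (f i) (f' i)) (fun i => min (g i) (g' i)) := by
  intro i
  have := h i; have := h (i+1); have := h' i; have := h' (i+1)
  constructor <;> simp only [le_min_iff, min_le_iff] <;> omega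

lemma interlaceMinus_min (f f' g g' : ℕ → ℕ)
    (hf : IsYoungSeq f) (hf' : IsYoungSeq f') (hg : IsYoungSeq g) (hg' : IsYoungSeq g')
    (h : InterlaceMinus f g) (h' : InterlaceMinus f' g') :
    InterlaceMinus (fun i => min (f i) (f' i)) (fun i => min (g i) (g' i)) := by
  intro j
  rw [conj_min f f' hf hf', conj_min f f' hf hf', conj_min g g' hg hg']
  have := h j; have := h' j
  constructor <;> simp only [le_min_iff, min_le_iff] <;> omega

lemma interlaceSgn_min (ε : ℤ) (f f' g g' : ℕ → ℕ)
    (hf : IsYoungSeq f) (hf' : IsYoungSeq f') (hg : IsYoungSeq g) (hg' : IsYoungSeq g')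
    (h : InterlaceSgn ε f g) (h' : InterlaceSgn ε f' g') :
    InterlaceSgn ε (fun i => min (f i) (f' i)) (fun i => min (g i) (g' i)) := by
  unfold InterlaceSgn at *
  by_cases hε : ε = 1
  · simp only [hε, if_pos rfl] at *
    exact interlacePlus_min f f' g g' h h'
  · simp only [if_neg hε] at *
    exact interlaceMinus_min f f' g g' hf hf' hg hg' h h'

lemma young_min (f f' : ℕ → ℕ) (hf : IsYoungSeq f) (hf' : IsYoungSeq f') :
    IsYoungSeq (fun i => min (f i) (f' i)) := by
  obtain ⟨hd, N, hN⟩ := hf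
  obtain ⟨hd', N', hN'⟩ := hf'
  refine ⟨fun i => ?_, max N N', fun i hi => ?_⟩
  · have := hd i; have := hd' i
    simp only [le_min_iff, min_le_iff]; omega
  · have := hN i (le_trans (le_max_left _ _) hi)
    have := hN' i (le_trans (le_max_right _ _) hi)
    simp_all

theorem isTransition_min (σ θ μ : ℤ → ℤ) (νm νp : ℕ → ℕ)
    (V W : ℤ → ℕ → ℕ)
    (hV : IsTransition σ θ μ νm νp V) (hW : IsTransition σ θ μ νm νp W) :
    IsTransition σ θ μ νm νp (fun n i => min (V n i) (W n i)) := by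
  obtain ⟨hVy, ⟨A, hA⟩, ⟨B, hB⟩, hVi⟩ := hV
  obtain ⟨hWy, ⟨A', hA'⟩, ⟨B', hB'⟩, hWi⟩ := hW
  refine ⟨fun n => young_min _ _ (hVy n) (hWy n), ⟨min A A', fun n hn => ?_⟩,
    ⟨max B B', fun n hn => ?_⟩, fun k => ?_⟩
  · have h1 := hA n (lt_of_lt_of_le hn (min_le_left _ _))
    have h2 := hA' n (lt_of_lt_of_le hn (min_le_right _ _))
    funext i; simp [h1, h2]
  · have h1 := hB n (lt_of_le_of_lt (le_max_left _ _) hn)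
    have h2 := hB' n (lt_of_le_of_lt (le_max_right _ _) hn)
    funext i; simp [h1, h2]
  · have h1 := hVi k
    have h2 := hWi k
    by_cases hμk : μ (θ k) = 1
    · simp only [if_pos hμk] at *
      exact interlaceSgn_min _ _ _ _ _ (hVy k) (hWy k) (hVy (k+1)) (hWy (k+1)) h1 h2
    · simp only [if_neg hμk] at *
      exact interlaceSgn_min _ _ _ _ _ (hVy (k+1)) (hWy (k+1)) (hVy k) (hWy k) h1 h2

/-- The pointwise intersection of two transitions of type `(σ,θ;μ,ν)` is again a
transition of that type; consequently a minimum transition, if it exists, is unique. -/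
theorem transition_intersection_and_min_unique (L : ℕ) (hL : 0 < L)
    (σ θ μ : ℤ → ℤ)
    (hσ : ∀ k, σ k = 1 ∨ σ k = -1) (hμ : ∀ k, μ k = 1 ∨ μ k = -1)
    (hθ : Function.Bijective θ) (hθL : ∀ k : ℤ, θ (k + L) = θ k + L)
    (νm νp : ℕ → ℕ) (hνm : IsYoungSeq νm) (hνp : IsYoungSeq νp)
    (V W : ℤ → ℕ → ℕ)
    (hV : IsTransition σ θ μ νm νp V) (hW : IsTransition σ θ μ νm νp W) :
    IsTransition σ θ μ νm νp (fun n i => min (V n i) (W n i)) ∧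
    (∀ V₁ V₂ : ℤ → ℕ → ℕ,
      (IsTransition σ θ μ νm νp V₁ ∧
        ∀ U, IsTransition σ θ μ νm νp U → ∀ n i, V₁ n i ≤ U n i) →
      (IsTransition σ θ μ νm νp V₂ ∧
        ∀ U, IsTransition σ θ μ νm νp U → ∀ n i, V₂ n i ≤ U n i) →
      V₁ = V₂) := by
  refine ⟨isTransition_min σ θ μ νm νp V W hV hW, ?_⟩
  rintro V₁ V₂ ⟨h1, h1min⟩ ⟨h2, h2min⟩
  funext n i
  exact le_antisymm (h1min V₂ h2 n i) (h2min V₁ h1 n i)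
end

section
/- The generating function identity for the topological vertex of ℂ³ with the staircase partition: the partition function M(q) · ∏_{n=1}^{N} (1 − q^{2n−1})^{−(N+1−n)} equals the specialization of the closed orbifold partition function ∏_{n>0}(1 − q₀ⁿq₁ⁿ)^{−2n} ∏_{n>0}(1 − q₀ⁿq₁^{n+1})^{−n} ∏_{n>N}(1 − q₀ⁿq₁^{n−1})^{−n} at q₀ = q^{−2N+1}, q₁ = q^{2N+1}, for N odd (as formal power series in q). -/
open PowerSeries Finset

noncomputable def q : PowerSeries ℚ := PowerSeries.X

lemma key_prod {M : Type*} [CommMonoid M] (g : ℕ → M) (d : ℕ)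
    (hg : ∀ e, d < e → g e = 1) (s : Finset ℕ) (φ m : ℕ → ℕ)
    (hφ : ∀ n ∈ s, 1 ≤ φ n) :
    ∏ n ∈ s, g (φ n) ^ m n
      = ∏ e ∈ Icc 1 d, g e ^ (∑ n ∈ s, if φ n = e then m n else 0) := by
  have h1 : ∀ e, g e ^ (∑ n ∈ s, if φ n = e then m n else 0)
      = ∏ n ∈ s, if φ n = e then g e ^ m n else 1 := by
    intro e
    rw [← Finset.prod_pow_eq_pow_sum]
    exact Finset.prod_congr rfl (fun n _ => by split <;> simp)
  simp_rw [h1]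
  rw [Finset.prod_comm]
  refine Finset.prod_congr rfl (fun n hn => ?_)
  rw [Finset.prod_ite_eq]
  by_cases h : φ n ∈ Icc 1 d
  · rw [if_pos h]
  · rw [if_neg h]
    have hd : d < φ n := by
      have := hφ n hn; simp [Finset.mem_Icc] at h; omega
    rw [hg _ hd, one_pow]

lemma sum_ite_single (s : Finset ℕ) (p : ℕ → Prop) [DecidablePred p] (m : ℕ → ℕ)
    (k : ℕ) (hmem : k ∈ s) (hpk : p k) (huniq : ∀ n ∈ s, p n → n = k) :
    (∑ n ∈ s, if p n then m n else 0) = m k := by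
  rw [Finset.sum_eq_single_of_mem k hmem (fun n hn hne => by
    rw [if_neg]; exact fun hp => hne (huniq n hn hp)), if_pos hpk]

lemma sum_ite_zero' (s : Finset ℕ) (p : ℕ → Prop) [DecidablePred p] (m : ℕ → ℕ)
    (h : ∀ n ∈ s, ¬ p n) :
    (∑ n ∈ s, if p n then m n else 0) = 0 :=
  Finset.sum_eq_zero fun n hn => if_neg (h n hn)

lemma abstract_id {M : Type*} [CommMonoid M] (g : ℕ → M) (d N : ℕ)
    (hg : ∀ e, d < e → g e = 1) :
    (∏ n ∈ Icc 1 (d + 1), g n ^ n) *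
      (∏ n ∈ Icc 1 N, g (2 * n - 1) ^ (N + 1 - n))
    = (∏ n ∈ Icc 1 (d + 1), g (2 * n) ^ (2 * n)) *
      (∏ n ∈ Icc 1 (d + 1), g (2 * n + 2 * N + 1) ^ n) *
      ∏ n ∈ Icc (N + 1) (N + d + 1), g (2 * n - 2 * N - 1) ^ n := by
  have E1 : ∏ n ∈ Icc 1 (d + 1), g n ^ n
      = ∏ e ∈ Icc 1 d, g e ^ (∑ n ∈ Icc 1 (d + 1), if n = e then n else 0) :=
    key_prod g d hg _ (fun n => n) (fun n => n)
      (fun n hn => by show 1 ≤ n; simp [Finset.mem_Icc] at hn; omega)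
  have E2 : ∏ n ∈ Icc 1 N, g (2 * n - 1) ^ (N + 1 - n)
      = ∏ e ∈ Icc 1 d, g e ^ (∑ n ∈ Icc 1 N, if 2 * n - 1 = e then N + 1 - n else 0) :=
    key_prod g d hg _ (fun n => 2 * n - 1) (fun n => N + 1 - n)
      (fun n hn => by show 1 ≤ 2 * n - 1; simp [Finset.mem_Icc] at hn; omega)
  have E3 : ∏ n ∈ Icc 1 (d + 1), g (2 * n) ^ (2 * n)
      = ∏ e ∈ Icc 1 d, g e ^ (∑ n ∈ Icc 1 (d + 1), if 2 * n = e then 2 * n else 0) :=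
    key_prod g d hg _ (fun n => 2 * n) (fun n => 2 * n)
      (fun n hn => by show 1 ≤ 2 * n; simp [Finset.mem_Icc] at hn; omega)
  have E4 : ∏ n ∈ Icc 1 (d + 1), g (2 * n + 2 * N + 1) ^ n
      = ∏ e ∈ Icc 1 d, g e ^ (∑ n ∈ Icc 1 (d + 1), if 2 * n + 2 * N + 1 = e then n else 0) :=
    key_prod g d hg _ (fun n => 2 * n + 2 * N + 1) (fun n => n)
      (fun n hn => by show 1 ≤ 2 * n + 2 * N + 1; simp [Finset.mem_Icc] at hn; omega)
  have E5 : ∏ n ∈ Icc (N + 1) (N + d + 1), g (2 * n - 2 * N - 1) ^ n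
      = ∏ e ∈ Icc 1 d, g e ^ (∑ n ∈ Icc (N + 1) (N + d + 1), if 2 * n - 2 * N - 1 = e then n else 0) :=
    key_prod g d hg _ (fun n => 2 * n - 2 * N - 1) (fun n => n)
      (fun n hn => by show 1 ≤ 2 * n - 2 * N - 1; simp [Finset.mem_Icc] at hn; omega)
  rw [E1, E2, E3, E4, E5, ← Finset.prod_mul_distrib, ← Finset.prod_mul_distrib,
    ← Finset.prod_mul_distrib]
  refine Finset.prod_congr rfl fun e he => ?_
  rw [← pow_add, ← pow_add, ← pow_add]
  congr 1
  simp only [Finset.mem_Icc] at he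
  have h1 : (∑ n ∈ Icc 1 (d + 1), if n = e then n else 0) = e :=
    sum_ite_single _ _ _ e (by simp [Finset.mem_Icc]; omega) rfl (fun n _ h => h)
  rw [h1]
  rcases Nat.even_or_odd e with ⟨k, hk⟩ | ⟨k, hk⟩
  · -- e even
    have h2 : (∑ n ∈ Icc 1 N, if 2 * n - 1 = e then N + 1 - n else 0) = 0 :=
      sum_ite_zero' _ _ _ (fun n hn => by simp [Finset.mem_Icc] at hn; omega)
    have h3 : (∑ n ∈ Icc 1 (d + 1), if 2 * n = e then 2 * n else 0) = 2 * k :=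
      sum_ite_single _ _ _ k (by simp [Finset.mem_Icc]; omega) (by omega)
        (fun n hn h => by omega)
    have h4 : (∑ n ∈ Icc 1 (d + 1), if 2 * n + 2 * N + 1 = e then n else 0) = 0 :=
      sum_ite_zero' _ _ _ (fun n hn => by simp [Finset.mem_Icc] at hn; omega)
    have h5 : (∑ n ∈ Icc (N + 1) (N + d + 1), if 2 * n - 2 * N - 1 = e then n else 0) = 0 :=
      sum_ite_zero' _ _ _ (fun n hn => by simp [Finset.mem_Icc] at hn; omega)
    rw [h2, h3, h4, h5]; omega
  · -- e odd
    have h3 : (∑ n ∈ Icc 1 (d + 1), if 2 * n = e then 2 * n else 0) = 0 :=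
      sum_ite_zero' _ _ _ (fun n hn => by simp [Finset.mem_Icc] at hn; omega)
    have h5 : (∑ n ∈ Icc (N + 1) (N + d + 1), if 2 * n - 2 * N - 1 = e then n else 0)
        = N + k + 1 :=
      sum_ite_single _ _ _ (N + k + 1) (by simp [Finset.mem_Icc]; omega) (by omega)
        (fun n hn h => by simp [Finset.mem_Icc] at hn; omega)
    rw [h3, h5]
    by_cases hkN : k + 1 ≤ N
    · have h2 : (∑ n ∈ Icc 1 N, if 2 * n - 1 = e then N + 1 - n else 0) = N + 1 - (k + 1) :=
        sum_ite_single _ _ _ (k + 1) (by simp [Finset.mem_Icc]; omega) (by omega)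
          (fun n hn h => by simp [Finset.mem_Icc] at hn; omega)
      have h4 : (∑ n ∈ Icc 1 (d + 1), if 2 * n + 2 * N + 1 = e then n else 0) = 0 :=
        sum_ite_zero' _ _ _ (fun n hn => by simp [Finset.mem_Icc] at hn; omega)
      rw [h2, h4]; omega
    · have h2 : (∑ n ∈ Icc 1 N, if 2 * n - 1 = e then N + 1 - n else 0) = 0 :=
        sum_ite_zero' _ _ _ (fun n hn => by simp [Finset.mem_Icc] at hn; omega)
      rw [h2]
      by_cases hk2 : N + 1 ≤ k
      · have h4 : (∑ n ∈ Icc 1 (d + 1), if 2 * n + 2 * N + 1 = e then n else 0) = k - N :=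
          sum_ite_single _ _ _ (k - N) (by simp [Finset.mem_Icc]; omega) (by omega)
            (fun n hn h => by simp [Finset.mem_Icc] at hn; omega)
        rw [h4]; omega
      · have h4 : (∑ n ∈ Icc 1 (d + 1), if 2 * n + 2 * N + 1 = e then n else 0) = 0 :=
          sum_ite_zero' _ _ _ (fun n hn => by simp [Finset.mem_Icc] at hn; omega)
        rw [h4]; omega

/-- `M(q)·∏_{n=1}^N (1 − q^{2n−1})^{−(N+1−n)}
  = ∏_{n>0}(1 − q₀ⁿq₁ⁿ)^{−2n} ∏_{n>0}(1 − q₀ⁿq₁^{n+1})^{−n} ∏_{n>N}(1 − q₀ⁿq₁^{n−1})^{−n}`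
at `q₀ = q^{−2N+1}`, `q₁ = q^{2N+1}`, for `N` odd, as formal power series in `q`. -/
theorem nc_vertex_C3_staircase (N : ℕ) (hN : Odd N) (d : ℕ) :
    PowerSeries.coeff d
      ((∏ n ∈ Icc 1 (d + 1), ((1 - q ^ n)⁻¹) ^ n) *
        ∏ n ∈ Icc 1 N, ((1 - q ^ (2 * n - 1))⁻¹) ^ (N + 1 - n))
    = PowerSeries.coeff d
      ((∏ n ∈ Icc 1 (d + 1), ((1 - q ^ (2 * n))⁻¹) ^ (2 * n)) *
        (∏ n ∈ Icc 1 (d + 1), ((1 - q ^ (2 * n + 2 * N + 1))⁻¹) ^ n) *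
        ∏ n ∈ Icc (N + 1) (N + d + 1), ((1 - q ^ (2 * n - 2 * N - 1))⁻¹) ^ n) := by
  set I : Ideal (PowerSeries ℚ) := Ideal.span {(PowerSeries.X : PowerSeries ℚ) ^ (d + 1)}
    with hI
  set π : PowerSeries ℚ →+* (PowerSeries ℚ ⧸ I) := Ideal.Quotient.mk I with hπ
  have hq0 : ∀ e, d < e → π (q ^ e) = 0 := by
    intro e he
    have hdvd : (X : PowerSeries ℚ) ^ (d + 1) ∣ q ^ e := by
      rw [q]; exact pow_dvd_pow _ (by omega)
    exact Ideal.Quotient.eq_zero_iff_mem.mpr (Ideal.mem_span_singleton.mpr hdvd)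
  have hunit : ∀ e, 1 ≤ e → (1 - q ^ e) * (1 - q ^ e)⁻¹ = 1 := by
    intro e he
    apply PowerSeries.mul_inv_cancel
    simp [q, zero_pow (by omega : e ≠ 0)]
  have hg : ∀ e, d < e → π ((1 - q ^ e)⁻¹) = 1 := by
    intro e he
    have h1 : (1 - q ^ e)⁻¹ = 1 + q ^ e * (1 - q ^ e)⁻¹ := by
      linear_combination hunit e (by omega)
    rw [h1, map_add, map_mul, map_one, hq0 e he, zero_mul, add_zero]
  have main : π ((∏ n ∈ Icc 1 (d + 1), ((1 - q ^ n)⁻¹) ^ n) *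
        ∏ n ∈ Icc 1 N, ((1 - q ^ (2 * n - 1))⁻¹) ^ (N + 1 - n))
      = π ((∏ n ∈ Icc 1 (d + 1), ((1 - q ^ (2 * n))⁻¹) ^ (2 * n)) *
        (∏ n ∈ Icc 1 (d + 1), ((1 - q ^ (2 * n + 2 * N + 1))⁻¹) ^ n) *
        ∏ n ∈ Icc (N + 1) (N + d + 1), ((1 - q ^ (2 * n - 2 * N - 1))⁻¹) ^ n) := by
    simp only [map_mul, map_prod, map_pow]
    exact abstract_id (fun e => π ((1 - q ^ e)⁻¹)) d N hg
  have hdvd : (X : PowerSeries ℚ) ^ (d + 1) ∣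
      ((∏ n ∈ Icc 1 (d + 1), ((1 - q ^ n)⁻¹) ^ n) *
        ∏ n ∈ Icc 1 N, ((1 - q ^ (2 * n - 1))⁻¹) ^ (N + 1 - n)) -
      ((∏ n ∈ Icc 1 (d + 1), ((1 - q ^ (2 * n))⁻¹) ^ (2 * n)) *
        (∏ n ∈ Icc 1 (d + 1), ((1 - q ^ (2 * n + 2 * N + 1))⁻¹) ^ n) *
        ∏ n ∈ Icc (N + 1) (N + d + 1), ((1 - q ^ (2 * n - 2 * N - 1))⁻¹) ^ n) := by
    rw [← Ideal.mem_span_singleton, ← hI, ← Ideal.Quotient.eq_zero_iff_mem]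
    rw [← hπ] at *
    rw [map_sub, main, sub_self]
  have hc := (PowerSeries.X_pow_dvd_iff.mp hdvd) d (by omega)
  rw [map_sub, sub_eq_zero] at hc
  exact hc
end
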